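/- Let n ≥ 2 be an integer. For every positive integer m, there exists a unique increasing sequence of positive integers (c_1, c_2, …, c_k) such that c_1 ≥ n, c_i ≥ c_{i-1} + n for i = 2, 3, …, k, and m = F_{n,c_1} + F_{n,c_2} + ⋯ + F_{n,c_k}. -/

import Mathlib

section
variable {n : ℕ} {F : ℕ → ℕ}

private lemma Fpos (hn : 2 ≤ n) (hF1 : ∀ i, 1 ≤ i → i ≤ n → F i = 1)
    (hFrec : ∀ m, n ≤ m → F (m + 1) = F m + F (m + 1 - n)) :
    ∀ i, 1 ≤ i → 1 ≤ F i := by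
  intro i
  induction i using Nat.strong_induction_on with
  | _ i ih =>
    intro hi
    rcases le_or_gt i n with h | h
    · rw [hF1 i hi h]
    · obtain ⟨m, rfl⟩ : ∃ m, i = m + 1 := ⟨i - 1, by omega⟩
      rw [hFrec m (by omega)]
      have := ih m (by omega) (by omega)
      omega

private lemma Fstep (hn : 2 ≤ n) (hF1 : ∀ i, 1 ≤ i → i ≤ n → F i = 1)
    (hFrec : ∀ m, n ≤ m → F (m + 1) = F m + F (m + 1 - n)) :
    ∀ m, n ≤ m → F m < F (m + 1) := by
  intro m hm
  rw [hFrec m hm]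
  have := Fpos hn hF1 hFrec (m + 1 - n) (by omega)
  omega

private lemma Fmono (hn : 2 ≤ n) (hF1 : ∀ i, 1 ≤ i → i ≤ n → F i = 1)
    (hFrec : ∀ m, n ≤ m → F (m + 1) = F m + F (m + 1 - n)) :
    ∀ a b, n ≤ a → a ≤ b → F a ≤ F b := by
  intro a b ha hab
  induction b, hab using Nat.le_induction with
  | base => exact le_refl _
  | succ b hb ih =>
      exact le_trans ih (le_of_lt (Fstep hn hF1 hFrec b (le_trans ha hb)))

private lemma Fgrow (hn : 2 ≤ n) (hF1 : ∀ i, 1 ≤ i → i ≤ n → F i = 1)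
    (hFrec : ∀ m, n ≤ m → F (m + 1) = F m + F (m + 1 - n)) :
    ∀ k, k + 1 ≤ F (n + k) := by
  intro k
  induction k with
  | zero =>
      have := hF1 n (by omega) le_rfl
      simpa using this.ge
  | succ k ih =>
      have h := hFrec (n + k) (by omega)
      have e : n + k + 1 - n = k + 1 := by omega
      rw [e] at h
      have hp := Fpos hn hF1 hFrec (k + 1) (by omega)
      have e2 : n + (k + 1) = n + k + 1 := by omega
      rw [e2]
      omega


private lemma Fbound (hn : 2 ≤ n) (hF1 : ∀ i, 1 ≤ i → i ≤ n → F i = 1)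
    (hFrec : ∀ m, n ≤ m → F (m + 1) = F m + F (m + 1 - n))
    (hpos : ∀ i, 1 ≤ i → 1 ≤ F i)
    (hmono : ∀ a b, n ≤ a → a ≤ b → F a ≤ F b) :
    ∀ c (L : List ℕ), (∀ x ∈ L, n ≤ x) → L.Chain' (fun a b => b + n ≤ a) →
      (∀ x ∈ L, x ≤ c) → (L.map F).sum < F (c + 1) := by
  intro c
  induction c using Nat.strong_induction_on with
  | _ c ih =>
    intro L hge hch hle
    match L with
    | [] =>
        have := hpos (c + 1) (by omega)
        simp; omega
    | d :: T =>
        have hdn : n ≤ d := hge d (by simp)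
        have hdc : d ≤ c := hle d (by simp)
        haveI : IsTrans ℕ (fun a b : ℕ => b + n ≤ a) := ⟨fun a b c hab hbc => by omega⟩
        have hpw := (List.isChain_iff_pairwise (l := d :: T)).mp hch
        have hT : ∀ x ∈ T, x + n ≤ d := (List.pairwise_cons.mp hpw).1
        have hTsum : (T.map F).sum < F (d - n + 1) := by
          refine ih (d - n) (by omega) T (fun x hx => hge x (by simp [hx]))
            (hch.tail) (fun x hx => by have := hT x hx; omega)
        have hrec := hFrec d hdn
        have e : d + 1 - n = d - n + 1 := by omega
        rw [e] at hrec
        have hmon : F (d + 1) ≤ F (c + 1) := hmono (d + 1) (c + 1) (by omega) (by omega)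
        simp only [List.map_cons, List.sum_cons]
        omega


private lemma Fexist (hn : 2 ≤ n) (hF1 : ∀ i, 1 ≤ i → i ≤ n → F i = 1)
    (hFrec : ∀ m, n ≤ m → F (m + 1) = F m + F (m + 1 - n))
    (hpos : ∀ i, 1 ≤ i → 1 ≤ F i)
    (hmono : ∀ a b, n ≤ a → a ≤ b → F a ≤ F b)
    (hgrow : ∀ k, k + 1 ≤ F (n + k)) :
    ∀ m, ∃ L : List ℕ, (∀ x ∈ L, n ≤ x) ∧ L.Chain' (fun a b => b + n ≤ a) ∧
      (L.map F).sum = m ∧ ∀ x ∈ L, F x ≤ m := by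
  intro m
  induction m using Nat.strong_induction_on with
  | _ m ih =>
    rcases Nat.eq_zero_or_pos m with rfl | hm
    · exact ⟨[], by simp, List.isChain_nil, by simp, by simp⟩
    · set P : ℕ → Prop := fun c => n ≤ c ∧ F c ≤ m with hP
      have hPdec : DecidablePred P := fun c => instDecidableAnd
      have hPn : P n := ⟨le_refl n, by rw [hF1 n (by omega) le_rfl]; omega⟩
      set c := Nat.findGreatest P (n + m) with hc
      have hPc : P c := Nat.findGreatest_spec (by omega) hPn
      have hcle : c ≤ n + m := Nat.findGreatest_le _
      have hclt : c < n + m := by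
        rcases lt_or_eq_of_le hcle with h | h
        · exact h
        · exfalso
          have hg := hgrow m
          have := hPc.2
          rw [h] at this
          omega
      have hmax : m < F (c + 1) := by
        by_contra h
        push_neg at h
        exact Nat.findGreatest_is_greatest (Nat.lt_succ_self c) (by omega)
          ⟨by omega, h⟩
      have hFc1 : 1 ≤ F c := hpos c (by omega)
      have hFcm : F c ≤ m := hPc.2
      obtain ⟨L', hge', hch', hsum', hbd'⟩ := ih (m - F c) (by omega)
      have hrec := hFrec c hPc.1
      have hsmall : ∀ b ∈ L', b + n ≤ c := by
        intro b hb
        have hFb : F b ≤ m - F c := hbd' b hb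
        have hbn : n ≤ b := hge' b hb
        by_contra hcon
        push_neg at hcon
        -- c + 1 - n ≤ b
        rcases le_or_gt n (c + 1 - n) with h1 | h1
        · have := hmono (c + 1 - n) b h1 (by omega)
          have := hpos b (by omega)
          omega
        · have : F (c + 1 - n) = 1 := hF1 (c + 1 - n) (by omega) (by omega)
          have := hpos b (by omega)
          omega
      refine ⟨c :: L', ?_, ?_, ?_, ?_⟩
      · intro x hx
        rcases List.mem_cons.mp hx with rfl | hx
        · exact hPc.1
        · exact hge' x hx
      · rw [List.Chain', List.isChain_cons]
        refine ⟨?_, hch'⟩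
        intro b hb
        exact hsmall b (List.mem_of_mem_head? hb)
      · simp only [List.map_cons, List.sum_cons]
        omega
      · intro x hx
        rcases List.mem_cons.mp hx with rfl | hx
        · exact hFcm
        · have := hbd' x hx; omega


private lemma Funiq (hn : 2 ≤ n) (hF1 : ∀ i, 1 ≤ i → i ≤ n → F i = 1)
    (hFrec : ∀ m, n ≤ m → F (m + 1) = F m + F (m + 1 - n))
    (hpos : ∀ i, 1 ≤ i → 1 ≤ F i)
    (hmono : ∀ a b, n ≤ a → a ≤ b → F a ≤ F b)
    (hbound : ∀ c (L : List ℕ), (∀ x ∈ L, n ≤ x) → L.Chain' (fun a b => b + n ≤ a) →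
      (∀ x ∈ L, x ≤ c) → (L.map F).sum < F (c + 1)) :
    ∀ m (L1 L2 : List ℕ),
      (∀ x ∈ L1, n ≤ x) → L1.Chain' (fun a b => b + n ≤ a) → (L1.map F).sum = m →
      (∀ x ∈ L2, n ≤ x) → L2.Chain' (fun a b => b + n ≤ a) → (L2.map F).sum = m →
      L1 = L2 := by
  haveI : IsTrans ℕ (fun a b : ℕ => b + n ≤ a) := ⟨fun a b c hab hbc => by omega⟩
  have key : ∀ m (L1 L2 : List ℕ) (d1 d2 : ℕ) (T1 T2 : List ℕ),
      L1 = d1 :: T1 → L2 = d2 :: T2 →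
      (∀ x ∈ L1, n ≤ x) → L1.Chain' (fun a b => b + n ≤ a) → (L1.map F).sum = m →
      (∀ x ∈ L2, n ≤ x) → L2.Chain' (fun a b => b + n ≤ a) → (L2.map F).sum = m →
      ¬ d1 < d2 := by
    rintro m L1 L2 d1 d2 T1 T2 rfl rfl hge1 hch1 hsum1 hge2 hch2 hsum2 hlt
    have hd1n : n ≤ d1 := hge1 d1 (by simp)
    have hpw1 := (List.isChain_iff_pairwise (l := d1 :: T1)).mp hch1
    have hle1 : ∀ x ∈ d1 :: T1, x ≤ d1 := by
      intro x hx
      rcases List.mem_cons.mp hx with rfl | hx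
      · exact le_refl x
      · have := (List.pairwise_cons.mp hpw1).1 x hx; omega
    have hb := hbound d1 (d1 :: T1) hge1 hch1 hle1
    have hm2 : F d2 ≤ ((d2 :: T2).map F).sum := by
      simp only [List.map_cons, List.sum_cons]; omega
    have hm3 : F (d1 + 1) ≤ F d2 := hmono (d1 + 1) d2 (by omega) (by omega)
    omega
  intro m
  induction m using Nat.strong_induction_on with
  | _ m ih =>
    intro L1 L2 hge1 hch1 hsum1 hge2 hch2 hsum2
    match L1, L2 with
    | [], [] => rfl
    | [], d :: T =>
        exfalso
        have := hpos d (by have := hge2 d (by simp); omega)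
        simp only [List.map_cons, List.sum_cons] at hsum2
        simp at hsum1
        omega
    | d :: T, [] =>
        exfalso
        have := hpos d (by have := hge1 d (by simp); omega)
        simp only [List.map_cons, List.sum_cons] at hsum1
        simp at hsum2
        omega
    | d1 :: T1, d2 :: T2 =>
        have hd12 : d1 = d2 := by
          rcases lt_trichotomy d1 d2 with h | h | h
          · exact absurd h (key m _ _ d1 d2 T1 T2 rfl rfl hge1 hch1 hsum1 hge2 hch2 hsum2)
          · exact h
          · exact absurd h (key m _ _ d2 d1 T2 T1 rfl rfl hge2 hch2 hsum2 hge1 hch1 hsum1)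
        subst hd12
        have hF1d : 1 ≤ F d1 := hpos d1 (by have := hge1 d1 (by simp); omega)
        simp only [List.map_cons, List.sum_cons] at hsum1 hsum2
        have hT := ih (m - F d1) (by omega) T1 T2
          (fun x hx => hge1 x (by simp [hx])) hch1.tail (by omega)
          (fun x hx => hge2 x (by simp [hx])) hch2.tail (by omega)
        rw [hT]

end

/-- For an integer `n ≥ 2`, `F` is the generalized Fibonacci sequence:
`F 1 = ⋯ = F n = 1` and `F (m+1) = F m + F (m+1-n)` for `m ≥ n`.
Every positive integer has a unique representation as a sum of `F`-terms
whose indices are at least `n` and pairwise at least `n` apart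
(encoded as an increasing list of indices with consecutive gaps `≥ n`). -/
theorem generalized_zeckendorf (n : ℕ) (hn : 2 ≤ n) (F : ℕ → ℕ)
    (hF1 : ∀ i, 1 ≤ i → i ≤ n → F i = 1)
    (hFrec : ∀ m, n ≤ m → F (m + 1) = F m + F (m + 1 - n))
    (m : ℕ) (hm : 1 ≤ m) :
    ∃! L : List ℕ, (∀ c ∈ L, n ≤ c) ∧
      L.Chain' (fun a b => a + n ≤ b) ∧ (L.map F).sum = m := by
  have hpos := Fpos hn hF1 hFrec
  have hmono := Fmono hn hF1 hFrec
  have hgrow := Fgrow hn hF1 hFrec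
  have hbound := Fbound hn hF1 hFrec hpos hmono
  obtain ⟨L, hge, hch, hsum, -⟩ := Fexist hn hF1 hFrec hpos hmono hgrow m
  refine ⟨L.reverse, ⟨?_, ?_, ?_⟩, ?_⟩
  · intro c hc; exact hge c (List.mem_reverse.mp hc)
  · rw [List.Chain', List.isChain_reverse]
    exact hch
  · rw [List.map_reverse, List.sum_reverse]; exact hsum
  · rintro M ⟨hge', hch', hsum'⟩
    have hchM : M.reverse.Chain' (fun a b => b + n ≤ a) := by
      rw [List.Chain', List.isChain_reverse]
      exact hch'
    have hMe : M.reverse = L :=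
      Funiq hn hF1 hFrec hpos hmono hbound m M.reverse L
        (fun x hx => hge' x (List.mem_reverse.mp hx)) hchM
        (by rw [List.map_reverse, List.sum_reverse]; exact hsum')
        hge hch hsum
    rw [← hMe, List.reverse_reverse]
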